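/- For any positive integer n not belonging to O_FS, the cyclic group ℤ/nℤ is not FS-regular: there exist finite multisets A, A' with elements in ℤ/nℤ such that FS(A) = FS(A') but A ∼₀ A' fails. -/

import Mathlib

/-- The subset sums multiset: the multiset of sums of all sub-multisets of `A`. -/
def FS {G : Type*} [AddCommGroup G] (A : Multiset G) : Multiset G :=
  A.powerset.map Multiset.sum

/-- `A ∼₀ A'`: `A'` is obtained from `A` by flipping the signs of a zero-sum sub-multiset. -/
def Sim0 {G : Type*} [AddCommGroup G] [DecidableEq G] (A A' : Multiset G) : Prop :=
  ∃ B ≤ A, B.sum = 0 ∧ A' = (A - B) + B.map (fun x => -x)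

/-- `O_FS` : odd naturals `n ≥ 1` such that `(ℤ/nℤ)*` is covered by `{±2^j : j ≥ 0}`. -/
def OFS (n : ℕ) : Prop :=
  Odd n ∧ 1 ≤ n ∧ ∀ x : ℤ, IsCoprime x (n : ℤ) →
    ∃ j : ℕ, (n : ℤ) ∣ x - 2 ^ j ∨ (n : ℤ) ∣ x + 2 ^ j

lemma FS_zero {G : Type*} [AddCommGroup G] : FS (0 : Multiset G) = {0} := rfl

lemma FS_cons {G : Type*} [AddCommGroup G] (a : G) (s : Multiset G) :
    FS (a ::ₘ s) = FS s + (FS s).map (fun y => a + y) := by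
  simp [FS, Multiset.powerset_cons, Multiset.map_map, Function.comp_def]

lemma range_cast_eq_univ (n : ℕ) [NeZero n] :
    (Multiset.range n).map (Nat.cast : ℕ → ZMod n) = (Finset.univ : Finset (ZMod n)).val := by
  have hnd : ((Multiset.range n).map (Nat.cast : ℕ → ZMod n)).Nodup := by
    refine Multiset.Nodup.map_on ?_ (Multiset.nodup_range n)
    intro i hi j hj hij
    have hi' := Multiset.mem_range.mp hi
    have hj' := Multiset.mem_range.mp hj
    have := congrArg ZMod.val hij
    rwa [ZMod.val_cast_of_lt hi', ZMod.val_cast_of_lt hj'] at this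
  have key : (⟨_, hnd⟩ : Finset (ZMod n)) = Finset.univ := by
    apply Finset.eq_univ_of_card
    simp [Finset.card, ZMod.card]
  exact congrArg Finset.val key

lemma range_add_cast (n : ℕ) [NeZero n] (a : ℕ) :
    (Multiset.range (a + n)).map (Nat.cast : ℕ → ZMod n)
      = (Multiset.range a).map (Nat.cast : ℕ → ZMod n)
        + (Finset.univ : Finset (ZMod n)).val := by
  rw [Multiset.range_add, Multiset.map_add, Multiset.map_map]
  congr 1
  have hfun : ((Nat.cast : ℕ → ZMod n) ∘ (a + ·))
      = (fun y => (a : ZMod n) + y) ∘ (Nat.cast : ℕ → ZMod n) := by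
    funext i
    simp [Nat.cast_add]
  rw [hfun, ← Multiset.map_map, range_cast_eq_univ]
  exact Multiset.map_univ_val_equiv (Equiv.addLeft ((a : ZMod n)))

lemma map_mul_unit_range (n : ℕ) [NeZero n] (u : (ZMod n)ˣ) (q : ℕ) :
    ((Multiset.range (q * n + 1)).map (Nat.cast : ℕ → ZMod n)).map
        (fun y => (u : ZMod n) * y)
      = (Multiset.range (q * n + 1)).map (Nat.cast : ℕ → ZMod n) := by
  induction q with
  | zero => simp
  | succ q ih =>
      have hq : (q + 1) * n + 1 = (q * n + 1) + n := by ring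
      rw [hq, range_add_cast, Multiset.map_add, ih]
      congr 1
      exact Multiset.map_univ_val_equiv (Units.mulLeft u)

lemma FS_geom (n : ℕ) (c : ZMod n) (k : ℕ) :
    FS ((Multiset.range k).map (fun i => c * 2 ^ i))
      = (Multiset.range (2 ^ k)).map (fun j : ℕ => c * (j : ZMod n)) := by
  induction k with
  | zero =>
      have h1 : Multiset.range 1 = {0} := rfl
      simp [FS_zero, h1]
  | succ k ih =>
      rw [Multiset.range_succ, Multiset.map_cons, FS_cons, ih]
      have h2 : (2 : ℕ) ^ (k + 1) = 2 ^ k + 2 ^ k := by ring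
      rw [h2, Multiset.range_add, Multiset.map_add, Multiset.map_map, Multiset.map_map]
      congr 1
      refine Multiset.map_congr rfl fun j _ => ?_
      simp only [Function.comp_apply]
      push_cast
      ring

/-- If `n ∉ O_FS` then `ℤ/nℤ` is not `FS`-regular. -/
theorem not_FSRegular_of_not_OFS (n : ℕ) (hn : 0 < n) (h : ¬ OFS n) :
    ∃ A A' : Multiset (ZMod n), FS A = FS A' ∧ ¬ Sim0 A A' := by
  haveI : NeZero n := ⟨hn.ne'⟩
  by_cases hodd : Odd n
  · -- odd case
    have hn1 : n ≠ 1 := by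
      rintro rfl
      exact h ⟨odd_one, le_refl 1, fun x _ => ⟨0, Or.inl (by norm_num)⟩⟩
    have h' : ¬ ∀ x : ℤ, IsCoprime x (n : ℤ) →
        ∃ j : ℕ, (n : ℤ) ∣ x - 2 ^ j ∨ (n : ℤ) ∣ x + 2 ^ j :=
      fun hh => h ⟨hodd, hn, hh⟩
    push_neg at h'
    obtain ⟨x, hx, hxj⟩ := h'
    -- `x` is a unit mod n
    have hu : IsUnit ((x : ZMod n)) := by
      obtain ⟨a, b, hab⟩ := hx
      have hcast := congrArg (Int.cast : ℤ → ZMod n) hab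
      push_cast at hcast
      rw [ZMod.natCast_self] at hcast
      refine IsUnit.of_mul_eq_one ((a : ZMod n)) ?_
      rw [mul_comm]
      simpa using hcast
    set k := n.totient with hk
    have hk0 : 0 < k := Nat.totient_pos.mpr hn
    have hmod : 2 ^ k % n = 1 := by
      have hco : Nat.Coprime 2 n := hodd.coprime_two_left
      have := (Nat.ModEq.pow_totient hco)
      have h1n : 1 % n = 1 := Nat.mod_eq_of_lt (by omega)
      rw [Nat.ModEq, h1n] at this
      exact this
    set q := 2 ^ k / n with hqdef
    have hq : q * n + 1 = 2 ^ k := by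
      have h1 := Nat.div_add_mod (2 ^ k) n
      rw [hmod] at h1
      rw [mul_comm]
      exact h1
    refine ⟨(Multiset.range k).map (fun i => (2 : ZMod n) ^ i),
      (Multiset.range k).map (fun i => (x : ZMod n) * 2 ^ i), ?_, ?_⟩
    · have h1 : FS ((Multiset.range k).map (fun i => (2 : ZMod n) ^ i))
          = (Multiset.range (2 ^ k)).map (fun j : ℕ => ((j : ZMod n))) := by
        have := FS_geom n 1 k
        simpa using this
      have h2 := FS_geom n ((x : ZMod n)) k
      rw [h1, h2, ← hq]
      have := map_mul_unit_range n hu.unit q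
      rw [Multiset.map_map] at this
      simp only [Function.comp_def, IsUnit.unit_spec] at this
      exact this.symm
    · rintro ⟨B, hB, hsum, hA'⟩
      have hxA' : (x : ZMod n) ∈ (Multiset.range k).map (fun i => (x : ZMod n) * 2 ^ i) := by
        refine Multiset.mem_map.mpr ⟨0, ?_, by simp⟩
        simpa using hk0
      rw [hA'] at hxA'
      rcases Multiset.mem_add.mp hxA' with hmem | hmem
      · have hin : (x : ZMod n) ∈ (Multiset.range k).map (fun i => (2 : ZMod n) ^ i) :=
          Multiset.mem_of_le tsub_le_self hmem
        obtain ⟨i, -, hi⟩ := Multiset.mem_map.mp hin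
        refine (hxj i).1 ?_
        refine (ZMod.intCast_zmod_eq_zero_iff_dvd _ n).mp ?_
        push_cast
        rw [← hi]
        ring
      · obtain ⟨b, hbB, hb⟩ := Multiset.mem_map.mp hmem
        have hbA : b ∈ (Multiset.range k).map (fun i => (2 : ZMod n) ^ i) :=
          Multiset.mem_of_le hB hbB
        obtain ⟨i, -, hi⟩ := Multiset.mem_map.mp hbA
        refine (hxj i).2 ?_
        refine (ZMod.intCast_zmod_eq_zero_iff_dvd _ n).mp ?_
        push_cast
        rw [← hb, ← hi]
        ring
  · -- even case
    have hmod : n % 2 = 0 := Nat.even_iff.mp (Nat.not_odd_iff_even.mp hodd)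
    set a : ZMod n := ((n / 2 : ℕ) : ZMod n) with ha
    have h2a : a + a = 0 := by
      rw [ha, ← Nat.cast_add]
      have hnn : n / 2 + n / 2 = n := by omega
      rw [hnn, ZMod.natCast_self]
    have ha0 : a ≠ 0 := by
      rw [ha, Ne, ZMod.natCast_eq_zero_iff]
      intro hd
      have := Nat.le_of_dvd (by omega) hd
      omega
    have hFSid : ∀ s : Multiset (ZMod n), (s.map (fun y => a + (a + y))) = s := by
      intro s
      have hfun : (fun y : ZMod n => a + (a + y)) = id := by
        funext y
        rw [← add_assoc, h2a, zero_add]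
        rfl
      rw [hfun, Multiset.map_id]
    have key : ((FS (a ::ₘ a ::ₘ 0)).map (fun y => a + y)) = FS (a ::ₘ a ::ₘ 0) := by
      rw [FS_cons, Multiset.map_add, Multiset.map_map]
      simp only [Function.comp_def]
      rw [hFSid]
      exact add_comm _ _
    refine ⟨(0 : ZMod n) ::ₘ a ::ₘ a ::ₘ 0, a ::ₘ a ::ₘ a ::ₘ 0, ?_, ?_⟩
    · rw [FS_cons, FS_cons a (a ::ₘ a ::ₘ 0), key]
      simp
    · rintro ⟨B, hB, hsum, hA'⟩
      have hBmap : B.map (fun x => -x) = B := by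
        have hmem : ∀ b ∈ B, -b = b := by
          intro b hb
          have hbA : b ∈ (0 : ZMod n) ::ₘ a ::ₘ a ::ₘ 0 := Multiset.mem_of_le hB hb
          simp only [Multiset.mem_cons, Multiset.notMem_zero, or_false] at hbA
          rcases hbA with h0 | h0 | h0 <;> subst h0
          · simp
          · exact neg_eq_of_add_eq_zero_left h2a
          · exact neg_eq_of_add_eq_zero_left h2a
        calc B.map (fun x => -x) = B.map id := Multiset.map_congr rfl hmem
        _ = B := Multiset.map_id B
      rw [hBmap, tsub_add_cancel_of_le hB] at hA'
      have hcount := congrArg (Multiset.count (0 : ZMod n)) hA'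
      simp [Multiset.count_cons, Ne.symm ha0] at hcount
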